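/- Let G be a totally disconnected locally compact group, φ : G → G a topological automorphism, and U an open compact subgroup. Then H_top(φ⁻¹, U) = H_top(φ, U) − log Δ(φ), where Δ(φ) is the modulus of φ. -/

import Mathlib

open Filter Topology MeasureTheory

variable {G : Type*} [Group G]

/-- The `n`-th `φ`-cotrajectory `Cₙ(φ,U) = ⋂_{i<n} φ^{-i}(U)`. -/
def cotrajN (φ : MulAut G) (U : Subgroup G) (n : ℕ) : Subgroup G :=
  ⨅ i ∈ Finset.range n, Subgroup.comap (φ ^ i).toMonoidHom U

/-- `cₙ = [U : Cₙ(φ,U)]`. -/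
noncomputable def entIdx (φ : MulAut G) (U : Subgroup G) (n : ℕ) : ℕ :=
  (cotrajN φ U n).relIndex U

/-- The topological entropy of `φ` with respect to `U`,
`H_top(φ,U) = lim_n log cₙ / n` (the limit exists, so it equals the `limsup`). -/
noncomputable def Htop (φ : MulAut G) (U : Subgroup G) : ℝ :=
  limsup (fun n : ℕ => Real.log (entIdx φ U n) / n) atTop

/-- The `φ`-cotrajectory `C(φ,U) = ⋂_{n≥0} φ^{-n}(U)`. -/
def cotraj (φ : MulAut G) (U : Subgroup G) : Subgroup G :=
  ⨅ n : ℕ, Subgroup.comap (φ ^ n).toMonoidHom U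

/-- The topological entropy `h_top(φ) = sup {H_top(φ,U) : U open compact subgroup}`. -/
noncomputable def htop [TopologicalSpace G] (φ : MulAut G) : EReal :=
  ⨆ (U : Subgroup G) (_ : IsOpen (U : Set G) ∧ IsCompact (U : Set G)), ((Htop φ U : ℝ) : EReal)

/-! ### Auxiliary lemmas -/

open scoped ENNReal

set_option linter.unusedSectionVars false
set_option linter.unnecessarySimpa false
set_option linter.deprecated false

lemma mem_cotrajN {ψ : MulAut G} {U : Subgroup G} {n : ℕ} {x : G} :
    x ∈ cotrajN ψ U n ↔ ∀ i < n, (ψ ^ i) x ∈ U := by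
  simp [cotrajN, Subgroup.mem_iInf, Subgroup.mem_comap]

lemma cotrajN_succ (ψ : MulAut G) (U : Subgroup G) (n : ℕ) :
    cotrajN ψ U (n + 1) = cotrajN ψ U n ⊓ Subgroup.comap (ψ ^ n).toMonoidHom U := by
  ext x
  simp only [Subgroup.mem_inf, mem_cotrajN, Subgroup.mem_comap, MulEquiv.coe_toMonoidHom,
    Nat.lt_succ_iff_lt_or_eq]
  constructor
  · exact fun h => ⟨fun i hi => h i (Or.inl hi), h n (Or.inr rfl)⟩
  · rintro ⟨h1, h2⟩ i (hi | rfl)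
    · exact h1 i hi
    · exact h2

lemma cotrajN_one (ψ : MulAut G) (U : Subgroup G) : cotrajN ψ U 1 = U := by
  ext x
  simp only [mem_cotrajN, Nat.lt_one_iff]
  constructor
  · intro h; simpa using h 0 rfl
  · intro h i hi; subst hi; simpa using h

lemma cotrajN_le (ψ : MulAut G) (U : Subgroup G) {n : ℕ} (hn : 1 ≤ n) :
    cotrajN ψ U n ≤ U := by
  intro x hx
  have := mem_cotrajN.mp hx 0 hn
  simpa using this

lemma cotrajN_antitone (ψ : MulAut G) (U : Subgroup G) (n : ℕ) :
    cotrajN ψ U (n + 1) ≤ cotrajN ψ U n := by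
  rw [cotrajN_succ]; exact inf_le_left

lemma pow_mul_inv_pow (φ : MulAut G) {i m : ℕ} (h : i ≤ m) :
    φ ^ i * φ⁻¹ ^ m = φ⁻¹ ^ (m - i) := by
  rw [inv_pow, inv_pow]
  have hm : φ ^ (m - i) * φ ^ i = φ ^ m := by rw [← pow_add, Nat.sub_add_cancel h]
  rw [← hm, mul_inv_rev, mul_inv_cancel_left]

lemma cotrajN_inv_eq (φ : MulAut G) (U : Subgroup G) (m : ℕ) :
    cotrajN φ⁻¹ U (m + 1)
      = Subgroup.comap ((φ⁻¹ ^ m : MulAut G)).toMonoidHom (cotrajN φ U (m + 1)) := by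
  ext x
  simp only [Subgroup.mem_comap, mem_cotrajN, MulEquiv.coe_toMonoidHom, Nat.lt_succ_iff]
  constructor
  · intro h i hi
    have key : (φ ^ i) ((φ⁻¹ ^ m) x) = (φ⁻¹ ^ (m - i)) x := by
      rw [← MulAut.mul_apply, pow_mul_inv_pow φ hi]
    rw [key]
    exact h (m - i) (Nat.sub_le m i)
  · intro h j hj
    have key : (φ ^ (m - j)) ((φ⁻¹ ^ m) x) = (φ⁻¹ ^ j) x := by
      rw [← MulAut.mul_apply, pow_mul_inv_pow φ (Nat.sub_le m j), Nat.sub_sub_self hj]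
    rw [← key]
    exact h (m - j) (Nat.sub_le m j)

lemma preimage_inv_pow (φ : MulAut G) (m : ℕ) (s : Set G) :
    ⇑(φ⁻¹ ^ m : MulAut G) ⁻¹' s = ⇑(φ ^ m) '' s := by
  ext x
  simp only [Set.mem_preimage, Set.mem_image]
  constructor
  · intro h
    exact ⟨(φ⁻¹ ^ m) x, h, by
      rw [← MulAut.mul_apply, inv_pow, mul_inv_cancel, MulAut.one_apply]⟩
  · rintro ⟨y, hy, rfl⟩
    have : (φ⁻¹ ^ m) ((φ ^ m) y) = y := by
      rw [← MulAut.mul_apply, inv_pow, inv_mul_cancel, MulAut.one_apply]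
    rwa [this]

lemma meas_pow_image {mG : MeasurableSpace G} (μ : Measure G) (φ : MulAut G) (Δ : ℝ)
    (hmod : ∀ s : Set G, μ (⇑φ '' s) = ENNReal.ofReal Δ * μ s) (m : ℕ) (s : Set G) :
    μ (⇑(φ ^ m) '' s) = (ENNReal.ofReal Δ) ^ m * μ s := by
  induction m generalizing s with
  | zero => simp
  | succ m ih =>
      have h1 : ⇑(φ ^ (m + 1)) = ⇑(φ ^ m) ∘ ⇑φ := by rw [pow_succ]; rfl
      rw [h1, Set.image_comp, ih (⇑φ '' s), hmod, pow_succ]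
      ring

section Top
variable [TopologicalSpace G] [IsTopologicalGroup G]

lemma contPow {ψ : MulAut G} (h : Continuous ⇑ψ) (k : ℕ) : Continuous ⇑(ψ ^ k) := by
  induction k with
  | zero => simpa using continuous_id
  | succ k ih =>
      have h1 : (ψ ^ (k + 1) : MulAut G) = ψ ^ k * ψ := pow_succ ψ k
      rw [h1]
      have h2 : ⇑(ψ ^ k * ψ) = ⇑(ψ ^ k) ∘ ⇑ψ := rfl
      rw [h2]
      exact ih.comp h

lemma cotrajN_isOpen {ψ : MulAut G} (h : Continuous ⇑ψ) (U : Subgroup G)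
    (hU : IsOpen (U : Set G)) (n : ℕ) : IsOpen ((cotrajN ψ U n : Subgroup G) : Set G) := by
  induction n with
  | zero =>
      have : cotrajN ψ U 0 = ⊤ := by ext x; simp [mem_cotrajN]
      rw [this]; simpa using isOpen_univ
  | succ n ih =>
      rw [cotrajN_succ]
      have hc : IsOpen ((Subgroup.comap (ψ ^ n).toMonoidHom U : Subgroup G) : Set G) := by
        have : ((Subgroup.comap (ψ ^ n).toMonoidHom U : Subgroup G) : Set G)
            = ⇑(ψ ^ n) ⁻¹' (U : Set G) := rfl
        rw [this]
        exact hU.preimage (contPow h n)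
      have heq : ((cotrajN ψ U n ⊓ Subgroup.comap (ψ ^ n).toMonoidHom U : Subgroup G) : Set G)
          = (cotrajN ψ U n : Set G) ∩ (Subgroup.comap (ψ ^ n).toMonoidHom U : Set G) := rfl
      rw [heq]
      exact ih.inter hc

lemma finiteQuot (A U : Subgroup G) (hAo : IsOpen (A : Set G)) (hUc : IsCompact (U : Set G)) :
    Finite (↥U ⧸ A.subgroupOf U) := by
  have : CompactSpace ↥U := isCompact_iff_compactSpace.mp hUc
  apply Subgroup.quotient_finite_of_isOpen
  have : ((A.subgroupOf U : Subgroup ↥U) : Set ↥U) = ((↑) : ↥U → G) ⁻¹' (A : Set G) := rfl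
  rw [this]
  exact hAo.preimage continuous_subtype_val

lemma relindex_pos (A U : Subgroup G) (hAo : IsOpen (A : Set G)) (hUc : IsCompact (U : Set G)) :
    A.relIndex U ≠ 0 := by
  have := finiteQuot A U hAo hUc
  have h : A.relIndex U = Nat.card (↥U ⧸ A.subgroupOf U) := rfl
  rw [h]
  exact Nat.card_ne_zero.mpr ⟨⟨QuotientGroup.mk 1⟩, this⟩

lemma index_meas [MeasurableSpace G] [BorelSpace G] (μ : Measure G) [μ.IsMulLeftInvariant]
    (H K : Subgroup G) (hHK : H ≤ K) (hHo : IsOpen (H : Set G)) (hKc : IsCompact (K : Set G)) :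
    μ (K : Set G) = (H.relIndex K) * μ (H : Set G) := by
  have hfin : Finite (↥K ⧸ H.subgroupOf K) := finiteQuot H K hHo hKc
  set Q := ↥K ⧸ H.subgroupOf K with hQ
  let s : Q → Set G := fun q => (fun x => ((Quotient.out q : K) : G)⁻¹ * x) ⁻¹' (H : Set G)
  have hmeas : ∀ q, MeasurableSet (s q) :=
    fun q => hHo.measurableSet.preimage (measurable_const_mul _)
  have hcover : (K : Set G) = ⋃ q, s q := by
    ext x
    constructor
    · intro hx
      refine Set.mem_iUnion.mpr ⟨(QuotientGroup.mk (⟨x, hx⟩ : K) : Q), ?_⟩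
      have h1 : (QuotientGroup.mk (Quotient.out ((QuotientGroup.mk (⟨x, hx⟩ : K)) : Q)) : Q)
          = (QuotientGroup.mk (⟨x, hx⟩ : K) : Q) := Quotient.out_eq' _
      have h2 := (QuotientGroup.eq (s := H.subgroupOf K)).mp h1
      rw [Subgroup.mem_subgroupOf] at h2
      simpa [s] using h2
    · intro hx
      obtain ⟨q, hq⟩ := Set.mem_iUnion.mp hx
      have hmem : ((Quotient.out q : K) : G)⁻¹ * x ∈ H := hq
      have hx2 : x = ((Quotient.out q : K) : G) * (((Quotient.out q : K) : G)⁻¹ * x) := by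
        group
      rw [hx2]
      exact K.mul_mem (Quotient.out q : K).2 (hHK hmem)
  have hdisj : Pairwise (Function.onFun Disjoint s) := by
    intro q q' hne
    rw [Function.onFun, Set.disjoint_left]
    intro x hx hx'
    apply hne
    have h1 : ((Quotient.out q : K) : G)⁻¹ * x ∈ H := hx
    have h2 : ((Quotient.out q' : K) : G)⁻¹ * x ∈ H := hx'
    have h3 : ((Quotient.out q : K) : G)⁻¹ * ((Quotient.out q' : K) : G) ∈ H := by
      have := H.mul_mem h1 (H.inv_mem h2)
      simpa [mul_assoc] using this
    have h4 : (Quotient.out q)⁻¹ * (Quotient.out q') ∈ H.subgroupOf K := by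
      rw [Subgroup.mem_subgroupOf]
      simpa using h3
    calc q = (QuotientGroup.mk (Quotient.out q) : Q) := (Quotient.out_eq' _).symm
      _ = (QuotientGroup.mk (Quotient.out q') : Q) := (QuotientGroup.eq).mpr h4
      _ = q' := Quotient.out_eq' _
  have hcard : μ (K : Set G) = ∑' q : Q, μ (s q) := by
    rw [hcover, measure_iUnion hdisj hmeas]
  have hsq : ∀ q, μ (s q) = μ (H : Set G) := fun q => measure_preimage_mul μ _ _
  have : Fintype Q := Fintype.ofFinite Q
  rw [hcard]
  simp only [hsq]
  rw [tsum_fintype, Finset.sum_const, nsmul_eq_mul]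
  congr 2
  have h5 : H.relIndex K = Nat.card Q := rfl
  rw [h5, Nat.card_eq_fintype_card]
  simp

lemma entIdx_ne_zero {φ : MulAut G} (hφ : Continuous ⇑φ) (U : Subgroup G)
    (hUo : IsOpen (U : Set G)) (hUc : IsCompact (U : Set G)) (n : ℕ) :
    entIdx φ U n ≠ 0 :=
  relindex_pos _ _ (cotrajN_isOpen hφ U hUo n) hUc

lemma entIdx_bound {φ : MulAut G} (hφ : Continuous ⇑φ)
    (U : Subgroup G) (hUo : IsOpen (U : Set G)) (hUc : IsCompact (U : Set G)) (n : ℕ) :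
    entIdx φ U n ≤ ((Subgroup.comap φ.toMonoidHom U).relIndex U) ^ n := by
  set c₂ := (Subgroup.comap φ.toMonoidHom U).relIndex U with hc₂def
  have hc₂open : IsOpen ((Subgroup.comap φ.toMonoidHom U : Subgroup G) : Set G) := by
    have : ((Subgroup.comap φ.toMonoidHom U : Subgroup G) : Set G) = ⇑φ ⁻¹' (U : Set G) := rfl
    rw [this]; exact hUo.preimage hφ
  have hc₂ne : c₂ ≠ 0 := relindex_pos _ _ hc₂open hUc
  have hc₂1 : 1 ≤ c₂ := Nat.one_le_iff_ne_zero.mpr hc₂ne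
  induction n with
  | zero =>
      have h0 : cotrajN φ U 0 = ⊤ := by ext x; simp [mem_cotrajN]
      simp [entIdx, h0, Subgroup.relIndex_top_left]
  | succ n ih =>
      rcases Nat.eq_zero_or_pos n with rfl | hn
      · have h1 : cotrajN φ U 1 = U := cotrajN_one φ U
        simpa [entIdx, h1, Subgroup.relIndex_self] using hc₂1
      · obtain ⟨k, rfl⟩ := Nat.exists_eq_add_of_le hn
        set m := 1 + k with hm
        -- entIdx φ U (m+1) = relindex (V (m+1)) (V m) * entIdx φ U m
        have hVle : cotrajN φ U m ≤ U := cotrajN_le φ U (Nat.le_add_right 1 k)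
        have hmul : (cotrajN φ U (m + 1)).relIndex (cotrajN φ U m)
              * (cotrajN φ U m).relIndex U = entIdx φ U (m + 1) :=
          Subgroup.relIndex_mul_relIndex _ _ _ (cotrajN_antitone φ U m) hVle
        -- bound the first factor
        set X := Subgroup.comap (φ ^ m).toMonoidHom U with hX
        set Y := Subgroup.comap (φ ^ k).toMonoidHom U with hY
        have hVY : cotrajN φ U m ≤ Y := by
          intro x hx
          exact mem_cotrajN.mp hx k (by omega)
        have hXopen : IsOpen ((X : Subgroup G) : Set G) := by
          have : ((X : Subgroup G) : Set G) = ⇑(φ ^ m) ⁻¹' (U : Set G) := rfl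
          rw [this]; exact hUo.preimage (contPow hφ m)
        have hXY : X.relIndex Y = c₂ := by
          have hmk : φ ^ m = φ * φ ^ k := by rw [hm, add_comm, pow_succ']
          have hcomp : (φ ^ m).toMonoidHom
              = MonoidHom.comp φ.toMonoidHom (φ ^ k).toMonoidHom := by
            rw [hmk]; rfl
          have hXc : X = Subgroup.comap (φ ^ k).toMonoidHom (Subgroup.comap φ.toMonoidHom U) := by
            rw [hX, hcomp, ← Subgroup.comap_comap]
          rw [hXc, hY, Subgroup.relIndex_comap,
            Subgroup.map_comap_eq_self_of_surjective (MulEquiv.surjective (φ ^ k))]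
        have hXYne : X.relIndex Y ≠ 0 := by rw [hXY]; exact hc₂ne
        have hfac : (cotrajN φ U (m + 1)).relIndex (cotrajN φ U m) ≤ c₂ := by
          have h1 : cotrajN φ U (m + 1) = cotrajN φ U m ⊓ X := cotrajN_succ φ U m
          rw [h1, Subgroup.inf_relIndex_left]
          calc X.relIndex (cotrajN φ U m) ≤ X.relIndex Y :=
                Subgroup.relIndex_le_of_le_right hVY hXYne
            _ = c₂ := hXY
        calc entIdx φ U (m + 1)
            = (cotrajN φ U (m + 1)).relIndex (cotrajN φ U m)
              * (cotrajN φ U m).relIndex U := hmul.symm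
          _ ≤ c₂ * c₂ ^ m := Nat.mul_le_mul hfac ih
          _ = c₂ ^ (m + 1) := (pow_succ' c₂ m).symm

lemma isOpen_of_closed_of_finiteQuot (W U : Subgroup G) (hWU : W ≤ U)
    (hUo : IsOpen (U : Set G)) (hWcl : IsClosed (W : Set G))
    (hfin : Finite (↥U ⧸ W.subgroupOf U)) : IsOpen (W : Set G) := by
  have hFI : (W.subgroupOf U).FiniteIndex := Subgroup.finiteIndex_of_finite_quotient
  have hcl : IsClosed ((W.subgroupOf U : Subgroup ↥U) : Set ↥U) := by
    have h0 : ((W.subgroupOf U : Subgroup ↥U) : Set ↥U)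
        = ((↑) : ↥U → G) ⁻¹' (W : Set G) := rfl
    rw [h0]; exact hWcl.preimage continuous_subtype_val
  have hopen := Subgroup.isOpen_of_isClosed_of_finiteIndex _ hcl
  have himg := hUo.isOpenMap_subtype_val _ hopen
  have h1 : ((↑) : ↥U → G) '' ((W.subgroupOf U : Subgroup ↥U) : Set ↥U) = (W : Set G) := by
    ext x
    constructor
    · rintro ⟨y, hy, rfl⟩; exact hy
    · intro hx; exact ⟨⟨x, hWU hx⟩, hx, rfl⟩
  rw [← h1]; exact himg

lemma finiteQuot_of_pos_measure [MeasurableSpace G] [BorelSpace G] (μ : Measure G)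
    [μ.IsMulLeftInvariant] (W U : Subgroup G) (hWU : W ≤ U)
    (hUt : μ (U : Set G) ≠ ⊤) (hWcl : IsClosed (W : Set G)) (hW0 : μ (W : Set G) ≠ 0) :
    Finite (↥U ⧸ W.subgroupOf U) := by
  by_contra hinf
  rw [not_finite_iff_infinite] at hinf
  set Q := ↥U ⧸ W.subgroupOf U with hQ
  let s : Q → Set G := fun q => (fun x => ((Quotient.out q : U) : G)⁻¹ * x) ⁻¹' (W : Set G)
  have hmeas : ∀ q, MeasurableSet (s q) :=
    fun q => hWcl.measurableSet.preimage (measurable_const_mul _)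
  have hsub : ∀ q, s q ⊆ (U : Set G) := by
    intro q x hx
    have hmem : ((Quotient.out q : U) : G)⁻¹ * x ∈ W := hx
    have hx2 : x = ((Quotient.out q : U) : G) * (((Quotient.out q : U) : G)⁻¹ * x) := by
      group
    rw [hx2]
    exact U.mul_mem (Quotient.out q : U).2 (hWU hmem)
  have hdisj : Pairwise (Function.onFun Disjoint s) := by
    intro q q' hne
    rw [Function.onFun, Set.disjoint_left]
    intro x hx hx'
    apply hne
    have h1 : ((Quotient.out q : U) : G)⁻¹ * x ∈ W := hx
    have h2 : ((Quotient.out q' : U) : G)⁻¹ * x ∈ W := hx'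
    have h3 : ((Quotient.out q : U) : G)⁻¹ * ((Quotient.out q' : U) : G) ∈ W := by
      have := W.mul_mem h1 (W.inv_mem h2)
      simpa [mul_assoc] using this
    have h4 : (Quotient.out q)⁻¹ * (Quotient.out q') ∈ W.subgroupOf U := by
      rw [Subgroup.mem_subgroupOf]
      simpa using h3
    calc q = (QuotientGroup.mk (Quotient.out q) : Q) := (Quotient.out_eq' _).symm
      _ = (QuotientGroup.mk (Quotient.out q') : Q) := (QuotientGroup.eq).mpr h4
      _ = q' := Quotient.out_eq' _
  have hsq : ∀ q, μ (s q) = μ (W : Set G) := fun q => measure_preimage_mul μ _ _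
  have key : ∀ n : ℕ, (n : ℝ≥0∞) * μ (W : Set G) ≤ μ (U : Set G) := by
    intro n
    obtain ⟨T, hT⟩ := Infinite.exists_subset_card_eq Q n
    have h1 : μ (⋃ q ∈ T, s q) = ∑ q ∈ T, μ (s q) :=
      measure_biUnion_finset (fun q _ q' _ hne => hdisj hne) (fun q _ => hmeas q)
    have h2 : μ (⋃ q ∈ T, s q) ≤ μ (U : Set G) := by
      apply measure_mono
      exact Set.iUnion₂_subset fun q _ => hsub q
    calc (n : ℝ≥0∞) * μ (W : Set G) = ∑ q ∈ T, μ (s q) := by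
          simp only [hsq, Finset.sum_const, nsmul_eq_mul, hT]
      _ = μ (⋃ q ∈ T, s q) := h1.symm
      _ ≤ μ (U : Set G) := h2
  have htop : (⊤ : ℝ≥0∞) ≤ μ (U : Set G) := by
    have h1 : (⨆ n : ℕ, (n : ℝ≥0∞)) * μ (W : Set G) ≤ μ (U : Set G) := by
      rw [ENNReal.iSup_mul]
      exact iSup_le key
    rwa [ENNReal.iSup_natCast, ENNReal.top_mul hW0] at h1
  exact absurd (le_antisymm le_top htop) hUt

end Top

theorem Htop_inv_eq [TopologicalSpace G] [IsTopologicalGroup G]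
    [LocallyCompactSpace G] [TotallyDisconnectedSpace G] [MeasurableSpace G] [BorelSpace G]
    (μ : Measure G) [μ.IsHaarMeasure]
    (φ : MulAut G) (hφ : Continuous φ) (hφ' : Continuous φ⁻¹)
    (Δ : ℝ) (hΔ : 0 < Δ) (hmod : ∀ s : Set G, μ (⇑φ '' s) = ENNReal.ofReal Δ * μ s)
    (U : Subgroup G) (hUo : IsOpen (U : Set G)) (hUc : IsCompact (U : Set G)) :
    Htop φ⁻¹ U = Htop φ U - Real.log Δ := by
  have hφc : Continuous ⇑φ := hφ
  have hT2 : T2Space G := by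
    have h1 : IsClosed ({(1 : G)} : Set G) := by
      have h2 := isClosed_connectedComponent (x := (1 : G))
      rwa [totallyDisconnectedSpace_iff_connectedComponent_singleton.mp
        ‹TotallyDisconnectedSpace G› 1] at h2
    exact IsTopologicalGroup.t2Space_iff_one_closed.mpr h1
  set c : ℕ → ℕ := fun n => entIdx φ U n with hcdef
  set c' : ℕ → ℕ := fun n => entIdx φ⁻¹ U n with hc'def
  -- the key index identity
  have hlog : ∀ m : ℕ, Real.log (c' (m + 1)) = Real.log (c (m + 1)) - m * Real.log Δ := by
    intro m
    set V := cotrajN φ U (m + 1) with hV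
    set W := cotrajN φ⁻¹ U (m + 1) with hW
    have hVopen : IsOpen (V : Set G) := cotrajN_isOpen hφc U hUo (m + 1)
    have hVle : V ≤ U := cotrajN_le φ U (Nat.le_add_left 1 m)
    have hWle : W ≤ U := cotrajN_le φ⁻¹ U (Nat.le_add_left 1 m)
    have hVcl : IsClosed (V : Set G) := Subgroup.isClosed_of_isOpen V hVopen
    have hVcomp : IsCompact (V : Set G) := hUc.of_isClosed_subset hVcl hVle
    have hV0 : μ (V : Set G) ≠ 0 := hVopen.measure_ne_zero μ ⟨1, V.one_mem⟩
    have hVt : μ (V : Set G) ≠ ⊤ := hVcomp.measure_lt_top.ne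
    have h1 : μ (U : Set G) = (c (m + 1)) * μ (V : Set G) :=
      index_meas μ V U hVle hVopen hUc
    have hWset : (W : Set G) = ⇑(φ ^ m) '' (V : Set G) := by
      rw [hW, cotrajN_inv_eq φ U m]
      have h0 : ((Subgroup.comap ((φ⁻¹ ^ m : MulAut G)).toMonoidHom V : Subgroup G) : Set G)
          = ⇑(φ⁻¹ ^ m : MulAut G) ⁻¹' (V : Set G) := rfl
      rw [h0, preimage_inv_pow]
    have h3 : μ (W : Set G) = (ENNReal.ofReal Δ) ^ m * μ (V : Set G) := by
      rw [hWset]; exact meas_pow_image μ φ Δ hmod m _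
    have hWcomp : IsCompact (W : Set G) := by
      rw [hWset]; exact hVcomp.image (contPow hφc m)
    have hWcl : IsClosed (W : Set G) := hWcomp.isClosed
    have hW0 : μ (W : Set G) ≠ 0 := by
      rw [h3]
      exact mul_ne_zero (pow_ne_zero m (ENNReal.ofReal_pos.mpr hΔ).ne') hV0
    have hWfin : Finite (↥U ⧸ W.subgroupOf U) :=
      finiteQuot_of_pos_measure μ W U hWle hUc.measure_lt_top.ne hWcl hW0
    have hWopen : IsOpen (W : Set G) :=
      isOpen_of_closed_of_finiteQuot W U hWle hUo hWcl hWfin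
    have h2 : μ (U : Set G) = (c' (m + 1)) * μ (W : Set G) :=
      index_meas μ W U hWle hWopen hUc
    have hc'0' : c' (m + 1) ≠ 0 := relindex_pos W U hWopen hUc
    have h4 : ((c (m + 1) : ℝ≥0∞)) = (c' (m + 1) : ℝ≥0∞) * (ENNReal.ofReal Δ) ^ m := by
      have h5 := h1.symm.trans h2
      rw [h3, ← mul_assoc] at h5
      exact (ENNReal.mul_left_inj hV0 hVt).mp h5
    have hc'0 : c' (m + 1) ≠ 0 := hc'0'
    have hΔm : (0 : ℝ) < Δ ^ m := pow_pos hΔ m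
    have h5 : ((c (m + 1)) : ℝ) = ((c' (m + 1)) : ℝ) * Δ ^ m := by
      have h6 : ((c (m + 1) : ℝ≥0∞)) = ((c' (m + 1) : ℝ≥0∞)) * ENNReal.ofReal (Δ ^ m) := by
        rw [h4, ← ENNReal.ofReal_pow hΔ.le]
      calc ((c (m + 1)) : ℝ) = ((c (m + 1) : ℝ≥0∞)).toReal := by simp
        _ = (((c' (m + 1) : ℝ≥0∞)) * ENNReal.ofReal (Δ ^ m)).toReal := by rw [h6]
        _ = ((c' (m + 1)) : ℝ) * Δ ^ m := by
            rw [ENNReal.toReal_mul, ENNReal.toReal_ofReal hΔm.le]; simp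
    rw [h5, Real.log_mul (by exact_mod_cast hc'0) (ne_of_gt hΔm), Real.log_pow]
    ring
  -- limsup bookkeeping
  set g : ℕ → ℝ := fun n => Real.log (c n) / n with hgdef
  set f' : ℕ → ℝ := fun n => Real.log (c' n) / n with hf'def
  set L : ℝ := -(Real.log Δ) with hLdef
  set v : ℕ → ℝ := fun n => L + Real.log Δ / n with hvdef
  have hvtend : Tendsto v atTop (𝓝 L) := by
    have h0 : Tendsto (fun n : ℕ => Real.log Δ / n) atTop (𝓝 0) :=
      tendsto_const_div_atTop_nhds_zero_nat _
    have h1 := (tendsto_const_nhds (x := L) (f := atTop)).add h0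
    simpa using h1
  have heq : ∀ᶠ n in atTop, f' n = (g + v) n := by
    filter_upwards [eventually_ge_atTop 1] with n hn
    obtain ⟨m, rfl⟩ := Nat.exists_eq_add_of_le hn
    rw [add_comm 1 m]
    show Real.log (c' (m + 1)) / ((m + 1 : ℕ) : ℝ)
        = Real.log (c (m + 1)) / ((m + 1 : ℕ) : ℝ) + (L + Real.log Δ / ((m + 1 : ℕ) : ℝ))
    rw [hlog m, hLdef]
    have hne : ((m : ℝ) + 1) ≠ 0 := by positivity
    push_cast
    field_simp
    ring
  -- bounds for g
  have hc2ne : (Subgroup.comap φ.toMonoidHom U).relIndex U ≠ 0 := by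
    apply relindex_pos _ _ _ hUc
    have h0 : ((Subgroup.comap φ.toMonoidHom U : Subgroup G) : Set G)
        = ⇑φ ⁻¹' (U : Set G) := rfl
    rw [h0]; exact hUo.preimage hφc
  set B : ℝ := Real.log ((Subgroup.comap φ.toMonoidHom U).relIndex U) with hBdef
  have hB0 : 0 ≤ B :=
    Real.log_nonneg (by exact_mod_cast Nat.one_le_iff_ne_zero.mpr hc2ne)
  have hcn1 : ∀ n, (1 : ℝ) ≤ (c n : ℝ) := fun n => by
    exact_mod_cast Nat.one_le_iff_ne_zero.mpr (entIdx_ne_zero hφc U hUo hUc n)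
  have hgle : ∀ n, g n ≤ B := by
    intro n
    rcases Nat.eq_zero_or_pos n with rfl | hn
    · simpa [hgdef] using hB0
    · have h1 : (c n : ℝ) ≤ (((Subgroup.comap φ.toMonoidHom U).relIndex U : ℕ) : ℝ) ^ n := by
        exact_mod_cast entIdx_bound hφc U hUo hUc n
      have h2 : Real.log (c n) ≤ n * B := by
        calc Real.log (c n)
            ≤ Real.log ((((Subgroup.comap φ.toMonoidHom U).relIndex U : ℕ) : ℝ) ^ n) :=
              Real.log_le_log (by linarith [hcn1 n]) h1
          _ = n * B := by rw [Real.log_pow]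
      show Real.log (c n) / (n : ℝ) ≤ B
      rw [div_le_iff₀ (by exact_mod_cast hn)]
      calc Real.log (c n) ≤ n * B := h2
        _ = B * n := mul_comm _ _
  have hg0 : ∀ n, 0 ≤ g n := fun n =>
    div_nonneg (Real.log_nonneg (hcn1 n)) (Nat.cast_nonneg n)
  have hgbdd : IsBoundedUnder (· ≤ ·) atTop g := isBoundedUnder_of ⟨B, hgle⟩
  have hgbdd' : IsBoundedUnder (· ≥ ·) atTop g := isBoundedUnder_of ⟨0, hg0⟩
  have hnv : Tendsto (-v) atTop (𝓝 (-L)) := hvtend.neg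
  have key : limsup (g + v) atTop = limsup g atTop + L := by
    apply le_antisymm
    · have h := limsup_add_le (u := g) (v := v) hgbdd' hgbdd
        hvtend.isBoundedUnder_ge.isCoboundedUnder_le hvtend.isBoundedUnder_le
      rwa [hvtend.limsup_eq] at h
    · have hgv_le : IsBoundedUnder (· ≤ ·) atTop (g + v) :=
        isBoundedUnder_le_add hgbdd hvtend.isBoundedUnder_le
      have hgv_ge : IsBoundedUnder (· ≥ ·) atTop (g + v) :=
        isBoundedUnder_ge_add hgbdd' hvtend.isBoundedUnder_ge
      have h := limsup_add_le (u := g + v) (v := -v) hgv_ge hgv_le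
        hnv.isBoundedUnder_ge.isCoboundedUnder_le hnv.isBoundedUnder_le
      have heq2 : (g + v) + (-v) = g := by funext n; simp
      rw [heq2, hnv.limsup_eq] at h
      linarith
  have hHf : Htop φ⁻¹ U = limsup f' atTop := rfl
  have hHg : Htop φ U = limsup g atTop := rfl
  rw [hHf, hHg, limsup_congr heq, key, hLdef]
  ring
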